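/- Let d ≥ 2 and n ≥ 2, and let f be a unanimous, group-strategyproof mechanism for n agents in ℝ^d. Then for every profile x, either R(f(x)) = 0 (the output is deterministic), or there exist agents i, j such that the support of f(x) is contained in the closed segment [x_i, x_j]. -/

import Mathlib

open MeasureTheory ENNReal

noncomputable section

/-- Points in `d`-dimensional Euclidean space. -/
abbrev Pt (d : ℕ) : Type := EuclideanSpace ℝ (Fin d)

/-- A (randomized) mechanism: each profile is mapped to a Borel probability measure
with finite first moment. -/
def IsMechanism {d n : ℕ} (f : (Fin n → Pt d) → Measure (Pt d)) : Prop :=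
  ∀ x, IsProbabilityMeasure (f x) ∧ Integrable (fun y => y) (f x)

/-- Unanimity: if all agents report `z`, the output is the Dirac measure at `z`. -/
def Unanimous {d n : ℕ} (f : (Fin n → Pt d) → Measure (Pt d)) : Prop :=
  ∀ z : Pt d, f (fun _ => z) = Measure.dirac z

/-- Group-strategyproofness: for every profile, nonempty coalition, and deviation by
the coalition, some member of the coalition does not strictly gain. -/
def GroupStrategyproof {d n : ℕ} (f : (Fin n → Pt d) → Measure (Pt d)) : Prop :=
  ∀ x x' : Fin n → Pt d, ∀ S : Finset (Fin n), S.Nonempty →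
    (∀ i ∉ S, x' i = x i) →
    ∃ i ∈ S, ∫ y, ‖y - x i‖ ∂(f x') ≥ ∫ y, ‖y - x i‖ ∂(f x)

/-- The centroid of a distribution `P`: its vector-valued expectation. -/
def centroid {d : ℕ} (P : Measure (Pt d)) : Pt d := ∫ y, y ∂P

/-- The radius of a distribution `P`: the expected distance to its centroid. -/
def mradius {d : ℕ} (P : Measure (Pt d)) : ℝ := ∫ y, ‖y - centroid P‖ ∂P

/-- The support of a measure: the set of points all of whose neighborhoods have
positive measure (the smallest closed set of full measure). -/
def msupport {α : Type*} [TopologicalSpace α] [MeasurableSpace α] (P : Measure α) : Set α :=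
  {y | ∀ U ∈ nhds y, P U ≠ 0}

open scoped RealInnerProductSpace in
lemma eq_case_aux {d : ℕ} (P : Measure (Pt d)) [IsProbabilityMeasure P]
    (hInt : Integrable (fun y => y) P) (c : Pt d)
    (hne : centroid P ≠ c)
    (heq : ∫ y, ‖y - c‖ ∂P = ‖centroid P - c‖) :
    ∀ᵐ y ∂P, y - c = ‖y - c‖ • (‖centroid P - c‖⁻¹ • (centroid P - c)) := by
  set a : Pt d := centroid P - c with hadef
  have ha : a ≠ 0 := sub_ne_zero.mpr hne
  set u : Pt d := ‖a‖⁻¹ • a with hudef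
  have hnu : ‖u‖ = 1 := norm_smul_inv_norm ha
  have hIntc : Integrable (fun y => y - c) P := hInt.sub (integrable_const c)
  have hIntn : Integrable (fun y => ‖y - c‖) P := hIntc.norm
  have hmean : ∫ y, (y - c) ∂P = a := by
    rw [integral_sub hInt (integrable_const c), integral_const]
    simp [hadef, centroid]
  have hIinner : Integrable (fun y => (inner ℝ u (y - c) : ℝ)) P :=
    (innerSL ℝ u).integrable_comp hIntc
  have hint_inner : ∫ y, (inner ℝ u (y - c) : ℝ) ∂P = (inner ℝ u a : ℝ) := by
    have := (innerSL ℝ u).integral_comp_comm hIntc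
    rw [hmean] at this
    simpa using this
  have hua : (inner ℝ u a : ℝ) = ‖a‖ := by
    rw [hudef, real_inner_smul_left, real_inner_self_eq_norm_sq]
    have : ‖a‖ ≠ 0 := norm_ne_zero_iff.mpr ha
    field_simp
  have hg0 : ∫ y, (‖y - c‖ - (inner ℝ u (y - c) : ℝ)) ∂P = 0 := by
    rw [integral_sub hIntn hIinner, heq, hint_inner, hua, hadef]
    ring
  have hnn : ∀ y : Pt d, 0 ≤ ‖y - c‖ - (inner ℝ u (y - c) : ℝ) := by
    intro y
    have h1 : (inner ℝ u (y - c) : ℝ) ≤ ‖u‖ * ‖y - c‖ := real_inner_le_norm _ _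
    rw [hnu, one_mul] at h1
    linarith
  have hgae := (integral_eq_zero_iff_of_nonneg hnn (hIntn.sub hIinner)).mp hg0
  filter_upwards [hgae] with y hy
  have hy0 : ‖y - c‖ - (inner ℝ u (y - c) : ℝ) = 0 := hy
  have h1 : (inner ℝ u (y - c) : ℝ) = ‖u‖ * ‖y - c‖ := by rw [hnu, one_mul]; linarith
  have h2 := inner_eq_norm_mul_iff_real.mp h1
  rw [hnu, one_smul] at h2
  exact h2.symm

lemma zero_case_aux {d : ℕ} (P : Measure (Pt d)) [IsProbabilityMeasure P]
    (hInt : Integrable (fun y => y) P) (c : Pt d)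
    (h0 : ∫ y, ‖y - c‖ ∂P = 0) : mradius P = 0 := by
  have hIntc : Integrable (fun y => y - c) P := hInt.sub (integrable_const c)
  have hIntn : Integrable (fun y => ‖y - c‖) P := hIntc.norm
  have hae : ∀ᵐ y ∂P, y = c := by
    have := (integral_eq_zero_iff_of_nonneg (fun y => norm_nonneg _) hIntn).mp h0
    filter_upwards [this] with y hy
    have : ‖y - c‖ = 0 := hy
    rwa [norm_eq_zero, sub_eq_zero] at this
  have hCc : centroid P = c := by
    have h1 : ∫ y, y ∂P = ∫ (_ : Pt d), c ∂P :=
      integral_congr_ae (by filter_upwards [hae] with y hy; exact hy)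
    rw [centroid, h1, integral_const]
    simp
  have : ∫ y, ‖y - centroid P‖ ∂P = ∫ (_ : Pt d), (0:ℝ) ∂P := by
    refine integral_congr_ae ?_
    filter_upwards [hae] with y hy
    rw [hy, hCc, sub_self, norm_zero]
  rw [mradius, this, integral_zero]

lemma isClosed_segment_aux {d : ℕ} (p q : Pt d) : IsClosed (segment ℝ p q) := by
  rw [segment_eq_image]
  exact (isCompact_Icc.image (by continuity)).isClosed

lemma msupport_subset_aux {d : ℕ} (P : Measure (Pt d)) {s : Set (Pt d)}
    (hs : IsClosed s) (hae : ∀ᵐ y ∂P, y ∈ s) : msupport P ⊆ s := by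
  intro y₀ hy₀
  by_contra hnot
  refine hy₀ sᶜ (hs.isOpen_compl.mem_nhds hnot) ?_
  have := hae
  rw [ae_iff] at this
  convert this using 2
  rfl

/-- Output space reduction: for a unanimous, group-strategyproof mechanism on `n ≥ 2`
agents in `ℝ^d`, `d ≥ 2`, every output is either deterministic or supported on the
segment between two agents' locations. -/
theorem output_deterministic_or_on_segment {d n : ℕ} (hd : 2 ≤ d) (hn : 2 ≤ n)
    (f : (Fin n → Pt d) → Measure (Pt d))
    (hmech : IsMechanism f)
    (huna : Unanimous f)
    (hgsp : GroupStrategyproof f) :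
    ∀ x : Fin n → Pt d,
      mradius (f x) = 0 ∨ ∃ i j : Fin n, msupport (f x) ⊆ segment ℝ (x i) (x j) := by
  classical
  intro x
  by_cases hR : mradius (f x) = 0
  · exact Or.inl hR
  right
  obtain ⟨hP, hInt⟩ := hmech x
  set P := f x with hPdef
  haveI : IsProbabilityMeasure P := hP
  set C := centroid P with hCdef
  have hIntc : ∀ c : Pt d, Integrable (fun y => y - c) P := fun c => hInt.sub (integrable_const c)
  have hIntn : ∀ c : Pt d, Integrable (fun y => ‖y - c‖) P := fun c => (hIntc c).norm
  have hmean : ∀ c : Pt d, ∫ y, (y - c) ∂P = C - c := by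
    intro c
    rw [integral_sub hInt (integrable_const c), integral_const]
    simp [hCdef, centroid]
  have hJ : ∀ k, ‖C - x k‖ ≤ ∫ y, ‖y - x k‖ ∂P := by
    intro k
    calc ‖C - x k‖ = ‖∫ y, (y - x k) ∂P‖ := by rw [hmean]
      _ ≤ ∫ y, ‖y - x k‖ ∂P := norm_integral_le_integral_norm _
  have hKG : ∀ z : Pt d, ∃ k, (∫ y, ‖y - x k‖ ∂P) ≤ ‖z - x k‖ := by
    intro z
    obtain ⟨i, _, hi⟩ := hgsp x (fun _ => z) Finset.univ
      ⟨⟨0, by omega⟩, Finset.mem_univ _⟩ (fun i hi => absurd (Finset.mem_univ i) hi)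
    refine ⟨i, ?_⟩
    rw [huna z] at hi
    rwa [integral_dirac (fun y => ‖y - x i‖) z] at hi
  have hzero : ∀ c : Pt d, (∫ y, ‖y - c‖ ∂P) = 0 → False := fun c h0 =>
    hR (zero_case_aux P hInt c h0)
  -- Step A
  obtain ⟨i, hiKG⟩ := hKG C
  have hieq : ∫ y, ‖y - x i‖ ∂P = ‖C - x i‖ := le_antisymm hiKG (hJ i)
  have hCi : C ≠ x i := by
    intro h
    exact hzero (x i) (by rw [hieq, h, sub_self, norm_zero])
  have hae1 := eq_case_aux P hInt (x i) hCi hieq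
  set a : Pt d := C - x i with hadef
  have ha : a ≠ 0 := sub_ne_zero.mpr hCi
  set α : ℝ := ‖a‖ with hαdef
  have hα : 0 < α := norm_pos_iff.mpr ha
  set u : Pt d := α⁻¹ • a with hudef
  have hnu : ‖u‖ = 1 := norm_smul_inv_norm ha
  have hu0 : u ≠ 0 := by intro h; rw [h, norm_zero] at hnu; norm_num at hnu
  have hau : a = α • u := by
    rw [hudef, smul_smul, mul_inv_cancel₀ (ne_of_gt hα), one_smul]
  -- Step B: choice of ε
  set g : Fin n → ℝ := fun k =>
    min (if 0 < (∫ y, ‖y - x k‖ ∂P) - ‖C - x k‖ then (∫ y, ‖y - x k‖ ∂P) - ‖C - x k‖ else 1)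
        (if 0 < (inner ℝ u (C - x k) : ℝ) then (inner ℝ u (C - x k) : ℝ) else 1) with hgdef
  have hgpos : ∀ k, 0 < g k := by
    intro k
    refine lt_min ?_ ?_ <;> split <;> first | assumption | norm_num
  haveI : Nonempty (Fin n) := ⟨⟨0, by omega⟩⟩
  set ε : ℝ := (Finset.univ.inf' Finset.univ_nonempty g) / 2 with hεdef
  have hinfpos : 0 < Finset.univ.inf' Finset.univ_nonempty g := by
    rw [Finset.lt_inf'_iff]
    exact fun k _ => hgpos k
  have hεpos : 0 < ε := by positivity
  have hεlt : ∀ k, ε < g k := by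
    intro k
    calc ε < Finset.univ.inf' Finset.univ_nonempty g := by
          rw [hεdef]; linarith
      _ ≤ g k := Finset.inf'_le _ (Finset.mem_univ k)
  -- Step B: second application of KG
  obtain ⟨j, hjKG⟩ := hKG (C - ε • u)
  have hzj : C - ε • u - x j = (C - x j) - ε • u := by abel
  rw [hzj] at hjKG
  have hεu : ‖ε • u‖ = ε := by
    rw [norm_smul, hnu, mul_one, Real.norm_eq_abs, abs_of_pos hεpos]
  have hδj : ∫ y, ‖y - x j‖ ∂P = ‖C - x j‖ := by
    refine le_antisymm ?_ (hJ j)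
    by_contra hlt
    push_neg at hlt
    have h1 : ε < (∫ y, ‖y - x j‖ ∂P) - ‖C - x j‖ := by
      have h2 := hεlt j
      rw [hgdef] at h2
      have h3 := lt_of_lt_of_le h2 (min_le_left _ _)
      rwa [if_pos (by linarith)] at h3
    have h4 : ‖(C - x j) - ε • u‖ ≤ ‖C - x j‖ + ε := by
      calc ‖(C - x j) - ε • u‖ ≤ ‖C - x j‖ + ‖ε • u‖ := norm_sub_le _ _
        _ = ‖C - x j‖ + ε := by rw [hεu]
    linarith
  have hCj : C ≠ x j := by
    intro h
    exact hzero (x j) (by rw [hδj, h, sub_self, norm_zero])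
  have hae2 := eq_case_aux P hInt (x j) hCj hδj
  set b : Pt d := C - x j with hbdef
  have hb : b ≠ 0 := sub_ne_zero.mpr hCj
  set β : ℝ := ‖b‖ with hβdef
  have hβ : 0 < β := norm_pos_iff.mpr hb
  have hbu : (inner ℝ u b : ℝ) ≤ 0 := by
    by_contra hpos
    push_neg at hpos
    have h1 : ε < (inner ℝ u b : ℝ) := by
      have h2 := hεlt j
      rw [hgdef] at h2
      have h3 := lt_of_lt_of_le h2 (min_le_right _ _)
      rwa [if_pos hpos] at h3
    have hexp : ‖b - ε • u‖ ^ 2 = ‖b‖ ^ 2 - 2 * (inner ℝ b (ε • u) : ℝ) + ‖ε • u‖ ^ 2 :=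
      norm_sub_sq_real b (ε • u)
    have hib : (inner ℝ b (ε • u) : ℝ) = ε * (inner ℝ u b : ℝ) := by
      rw [real_inner_smul_right, real_inner_comm]
    have hble : β ≤ ‖b - ε • u‖ := by
      rw [← hδj]; exact hjKG
    have hsq : β ^ 2 ≤ ‖b - ε • u‖ ^ 2 := pow_le_pow_left₀ hβ.le hble 2
    rw [hexp, hib, hεu, ← hβdef] at hsq
    have h5 : ε * ε < ε * (inner ℝ u b : ℝ) := mul_lt_mul_of_pos_left h1 hεpos
    have h6 : 2 * (ε * (inner ℝ u b : ℝ)) ≤ ε ^ 2 := by linarith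
    have h7 : (0:ℝ) < ε * (inner ℝ u b : ℝ) := mul_pos hεpos (lt_trans hεpos h1)
    have h8 : ε ^ 2 = ε * ε := sq ε
    linarith
  -- Step C
  by_cases hκ : ∃ κ : ℝ, b = κ • u
  · obtain ⟨κ, hκb⟩ := hκ
    have hκβ : β = |κ| := by rw [hβdef, hκb, norm_smul, hnu, mul_one, Real.norm_eq_abs]
    have hκ0 : κ ≠ 0 := by
      intro h
      rw [h, zero_smul] at hκb
      exact hb hκb
    have hκinner : (inner ℝ u b : ℝ) = κ := by
      rw [hκb, real_inner_smul_right, real_inner_self_eq_norm_sq, hnu]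
      ring
    have hκneg : κ < 0 := lt_of_le_of_ne (hκinner ▸ hbu) hκ0
    have hβκ : β = -κ := by rw [hκβ, abs_of_neg hκneg]
    refine ⟨i, j, ?_⟩
    refine msupport_subset_aux P (isClosed_segment_aux _ _) ?_
    filter_upwards [hae1, hae2] with y h1 h2
    set s : ℝ := ‖y - x i‖ with hsdef
    set r : ℝ := ‖y - x j‖ with hrdef
    have hs0 : 0 ≤ s := norm_nonneg _
    have hr0 : 0 ≤ r := norm_nonneg _
    set L : ℝ := α + β with hLdef
    have hL : 0 < L := by positivity
    -- rewrite h2 in terms of u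
    have h2' : y - x j = (-r) • u := by
      rw [h2, hκb, smul_smul, smul_smul]
      congr 1
      rw [hβκ, inv_neg]
      field_simp
    have h1' : y - x i = s • u := h1
    have hxji : x j - x i = L • u := by
      have e1 : x j - x i = a - b := by rw [hadef, hbdef]; abel
      rw [e1, hau, hκb, hLdef, hβκ]
      module
    have hsr : s + r = L := by
      have e2 : (y - x i) - (y - x j) = x j - x i := by abel
      rw [h1', h2', hxji] at e2
      have e3 : (s + r - L) • u = 0 := by
        rw [show (s + r - L) • u = (s • u - (-r) • u) - L • u from by module, e2, sub_self]
      rcases smul_eq_zero.mp e3 with h | h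
      · linarith [sub_eq_zero.mp (by linarith [h] : s + r - L = 0)]
      · exact absurd h hu0
    have hsL : s ≤ L := by linarith
    refine ⟨1 - s / L, s / L, by
      have : s / L ≤ 1 := (div_le_one hL).mpr hsL
      linarith, by positivity, by ring, ?_⟩
    have hy : y = x i + s • u := by rw [← h1']; abel
    have hxj : x j = x i + L • u := by rw [← hxji]; abel
    rw [hy, hxj]
    have hL0 : L ≠ 0 := ne_of_gt hL
    match_scalars <;> field_simp <;> ring
  · exfalso
    apply hR
    have haeC : ∀ᵐ y ∂P, y = C := by
      filter_upwards [hae1, hae2] with y h1 h2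
      set s : ℝ := ‖y - x i‖ with hsdef
      set r : ℝ := ‖y - x j‖ with hrdef
      have h2' : y - x j = (r * β⁻¹) • b := by rw [h2, smul_smul]
      have hdiff : (s - α) • u = (r * β⁻¹ - 1) • b := by
        have e2 : (y - x i) - (y - x j) = x j - x i := by abel
        have e1 : x j - x i = a - b := by rw [hadef, hbdef]; abel
        rw [h1, h2', e1, hau] at e2
        rw [← sub_eq_zero,
          show (s - α) • u - (r * β⁻¹ - 1) • b = (s • u - (r * β⁻¹) • b) - (α • u - b) from by
            module,
          e2, sub_self]
      have hq : r * β⁻¹ - 1 = 0 := by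
        by_contra hq0
        refine hκ ⟨(s - α) / (r * β⁻¹ - 1), ?_⟩
        rw [div_eq_inv_mul, ← smul_smul, hdiff, inv_smul_smul₀ hq0]
      rw [hq, zero_smul] at hdiff
      rcases smul_eq_zero.mp hdiff with h | h
      · have hsα : s = α := by linarith [sub_eq_zero.mp h]
        have : y = x i + s • u := by rw [← h1]; abel
        rw [this, hsα, ← hau, hadef]
        abel
      · exact absurd h hu0
    have : ∫ y, ‖y - centroid P‖ ∂P = ∫ (_ : Pt d), (0:ℝ) ∂P := by
      refine integral_congr_ae ?_
      filter_upwards [haeC] with y hy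
      rw [hy, ← hCdef, sub_self, norm_zero]
    rw [show mradius (f x) = ∫ y, ‖y - centroid P‖ ∂P from rfl, this, integral_zero]
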